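/- Define F(r,z) = (C(r+z)/C(r)) e^{z/b}. For fixed z ≥ 0, F(r,z) is nonincreasing in r on the set where r, r+z ∈ [l,u]; equivalently, the partial derivative ∂F/∂r equals e^{z/b} [ (e^{-z/b}-1)(e^{(u-r)/b}-1) + (1-e^{z/b})(e^{(r-l)/b}-1) ] / (2b e^{(u-l)/b} C(r)^2) ≤ 0. -/

import Mathlib

set_option maxHeartbeats 2000000 in
theorem blp_F_deriv_r (l u b : ℝ) (hlu : l < u) (hb : 0 < b)
    (C : ℝ → ℝ)
    (hC : ∀ r, C r = 1 - (1 / 2) * (Real.exp (-(r - l) / b) + Real.exp (-(u - r) / b)))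
    (F : ℝ → ℝ → ℝ)
    (hF : ∀ r z, F r z = (C (r + z) / C r) * Real.exp (z / b))
    (z : ℝ) (hz : 0 ≤ z) (r : ℝ) (hr : r ∈ Set.Icc l u) (hrz : r + z ∈ Set.Icc l u) :
    HasDerivAt (fun s => F s z)
      (Real.exp (z / b) *
        ((Real.exp (-z / b) - 1) * (Real.exp ((u - r) / b) - 1) +
          (1 - Real.exp (z / b)) * (Real.exp ((r - l) / b) - 1)) /
        (2 * b * Real.exp ((u - l) / b) * (C r) ^ 2)) r ∧
    Real.exp (z / b) *
        ((Real.exp (-z / b) - 1) * (Real.exp ((u - r) / b) - 1) +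
          (1 - Real.exp (z / b)) * (Real.exp ((r - l) / b) - 1)) /
        (2 * b * Real.exp ((u - l) / b) * (C r) ^ 2) ≤ 0 := by
  have hb' : b ≠ 0 := ne_of_gt hb
  obtain ⟨hlr, hru⟩ := hr
  obtain ⟨hlrz, hrzu⟩ := hrz
  -- C is positive on [l,u]
  have hCpos : ∀ s, l ≤ s → s ≤ u → 0 < C s := by
    intro s hls hsu
    rw [hC]
    have h1 : Real.exp (-(s - l) / b) ≤ 1 := by
      rw [Real.exp_le_one_iff]
      apply div_nonpos_of_nonpos_of_nonneg <;> linarith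
    have h2 : Real.exp (-(u - s) / b) ≤ 1 := by
      rw [Real.exp_le_one_iff]
      apply div_nonpos_of_nonpos_of_nonneg <;> linarith
    rcases eq_or_lt_of_le hsu with hse | hslt
    · have h1' : Real.exp (-(s - l) / b) < 1 := by
        rw [Real.exp_lt_one_iff]
        apply div_neg_of_neg_of_pos <;> linarith
      nlinarith
    · have h2' : Real.exp (-(u - s) / b) < 1 := by
        rw [Real.exp_lt_one_iff]
        apply div_neg_of_neg_of_pos <;> linarith
      nlinarith
  have hCr : 0 < C r := hCpos r hlr hru
  have hCrne : C r ≠ 0 := ne_of_gt hCr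
  -- derivative of C
  have hCf : C = fun s => 1 - 1 / 2 * (Real.exp (-(s - l) / b) + Real.exp (-(u - s) / b)) :=
    funext hC
  subst hCf
  have hFf : (fun s => F s z) = fun s =>
      ((1 - 1 / 2 * (Real.exp (-(s + z - l) / b) + Real.exp (-(u - (s + z)) / b))) /
        (1 - 1 / 2 * (Real.exp (-(s - l) / b) + Real.exp (-(u - s) / b)))) * Real.exp (z / b) := by
    funext s; rw [hF]
  have hderivC : ∀ s : ℝ,
      HasDerivAt (fun t => 1 - 1 / 2 * (Real.exp (-(t - l) / b) + Real.exp (-(u - t) / b)))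
        (-(1 / 2 * (Real.exp (-(s - l) / b) * (-1 / b) + Real.exp (-(u - s) / b) * (1 / b)))) s := by
    intro s
    have h1 : HasDerivAt (fun t : ℝ => -(t - l) / b) (-1 / b) s := by
      have := (((hasDerivAt_id s).sub_const l).neg).div_const b
      simpa using this
    have h2 : HasDerivAt (fun t : ℝ => -(u - t) / b) (1 / b) s := by
      have := (((hasDerivAt_const s u).sub (hasDerivAt_id s)).neg).div_const b
      simpa using this
    have e1 := h1.exp
    have e2 := h2.exp
    have := ((e1.add e2).const_mul (1 / 2 : ℝ)).const_sub 1
    simpa [mul_comm] using this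
  have hinner : HasDerivAt
      (fun s => 1 - 1 / 2 * (Real.exp (-(s + z - l) / b) + Real.exp (-(u - (s + z)) / b)))
      (-(1 / 2 * (Real.exp (-(r + z - l) / b) * (-1 / b) + Real.exp (-(u - (r + z)) / b) * (1 / b)))) r := by
    have hcomp := (hderivC (r + z)).comp r ((hasDerivAt_id r).add_const z)
    simpa [Function.comp_def] using hcomp
  have hdiv := (hinner.div (hderivC r) hCrne).mul_const (Real.exp (z / b))
  -- abbreviations for the exponential values
  set Dz := -(1 / 2 * (Real.exp (-(r + z - l) / b) * (-1 / b) + Real.exp (-(u - (r + z)) / b) * (1 / b))) with hDz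
  set D0 := -(1 / 2 * (Real.exp (-(r - l) / b) * (-1 / b) + Real.exp (-(u - r) / b) * (1 / b))) with hD0
  -- the algebraic identity between the two derivative expressions
  have key : (Dz * (1 - 1 / 2 * (Real.exp (-(r - l) / b) + Real.exp (-(u - r) / b))) -
        (1 - 1 / 2 * (Real.exp (-(r + z - l) / b) + Real.exp (-(u - (r + z)) / b))) * D0) /
        (1 - 1 / 2 * (Real.exp (-(r - l) / b) + Real.exp (-(u - r) / b))) ^ 2 * Real.exp (z / b) =
      Real.exp (z / b) *
        ((Real.exp (-z / b) - 1) * (Real.exp ((u - r) / b) - 1) +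
          (1 - Real.exp (z / b)) * (Real.exp ((r - l) / b) - 1)) /
        (2 * b * Real.exp ((u - l) / b) *
          (1 - 1 / 2 * (Real.exp (-(r - l) / b) + Real.exp (-(u - r) / b))) ^ 2) := by
    rw [hDz, hD0]
    have hPpos := Real.exp_pos (r / b)
    have hLpos := Real.exp_pos (l / b)
    have hUpos := Real.exp_pos (u / b)
    have hWpos := Real.exp_pos (z / b)
    have E1 : Real.exp (-(r - l) / b) = Real.exp (l / b) / Real.exp (r / b) := by
      rw [← Real.exp_sub]; congr 1; field_simp; try ring
    have E2 : Real.exp (-(u - r) / b) = Real.exp (r / b) / Real.exp (u / b) := by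
      rw [← Real.exp_sub]; congr 1; field_simp; try ring
    have E3 : Real.exp (-(r + z - l) / b) = Real.exp (l / b) / (Real.exp (r / b) * Real.exp (z / b)) := by
      rw [← Real.exp_add, ← Real.exp_sub]; congr 1; field_simp; try ring
    have E4 : Real.exp (-(u - (r + z)) / b) = Real.exp (r / b) * Real.exp (z / b) / Real.exp (u / b) := by
      rw [← Real.exp_add, ← Real.exp_sub]; congr 1; field_simp; try ring
    have E5 : Real.exp (-z / b) = 1 / Real.exp (z / b) := by
      rw [neg_div, Real.exp_neg, one_div]
    have E6 : Real.exp ((u - r) / b) = Real.exp (u / b) / Real.exp (r / b) := by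
      rw [← Real.exp_sub]; congr 1; ring
    have E7 : Real.exp ((r - l) / b) = Real.exp (r / b) / Real.exp (l / b) := by
      rw [← Real.exp_sub]; congr 1; ring
    have E8 : Real.exp ((u - l) / b) = Real.exp (u / b) / Real.exp (l / b) := by
      rw [← Real.exp_sub]; congr 1; ring
    have hCrne' : (1 - 1 / 2 * (Real.exp (-(r - l) / b) + Real.exp (-(u - r) / b))) ≠ 0 := hCrne
    rw [E1, E2] at hCrne' ⊢
    rw [E3, E4, E5, E6, E7, E8]
    clear hdiv hinner hderivC hFf hCr hCrne hCpos hF hC E1 E2 E3 E4 E5 E6 E7 E8 hDz hD0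
    set P := Real.exp (r / b) with hPd
    set Lv := Real.exp (l / b) with hLd
    set Uv := Real.exp (u / b) with hUd
    set W := Real.exp (z / b) with hWd
    have hP : P ≠ 0 := ne_of_gt hPpos
    have hL : Lv ≠ 0 := ne_of_gt hLpos
    have hU : Uv ≠ 0 := ne_of_gt hUpos
    have hW : W ≠ 0 := ne_of_gt hWpos
    clear_value P Lv Uv W
    have hD2 : (1 - 1 / 2 * (Lv / P + P / Uv)) ^ 2 ≠ 0 := pow_ne_zero _ hCrne'
    have hden : 2 * b * (Uv / Lv) * (1 - 1 / 2 * (Lv / P + P / Uv)) ^ 2 ≠ 0 := by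
      apply mul_ne_zero (mul_ne_zero (by positivity) (by positivity)) hD2
    rw [div_mul_eq_mul_div, div_eq_div_iff hD2 hden]
    field_simp
    ring
  rw [hFf]
  constructor
  · have := hdiv
    rw [key] at this
    exact this
  · have h1 : Real.exp (-z / b) ≤ 1 := by
      rw [Real.exp_le_one_iff]
      apply div_nonpos_of_nonpos_of_nonneg <;> linarith
    have h2 : 1 ≤ Real.exp ((u - r) / b) := by
      rw [Real.one_le_exp_iff]
      apply div_nonneg <;> linarith
    have h3 : 1 ≤ Real.exp (z / b) := by
      rw [Real.one_le_exp_iff]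
      apply div_nonneg <;> linarith
    have h4 : 1 ≤ Real.exp ((r - l) / b) := by
      rw [Real.one_le_exp_iff]
      apply div_nonneg <;> linarith
    have t1 : (Real.exp (-z / b) - 1) * (Real.exp ((u - r) / b) - 1) ≤ 0 :=
      mul_nonpos_iff.mpr (Or.inr ⟨by linarith, by linarith⟩)
    have t2 : (1 - Real.exp (z / b)) * (Real.exp ((r - l) / b) - 1) ≤ 0 :=
      mul_nonpos_iff.mpr (Or.inr ⟨by linarith, by linarith⟩)
    have hnum : Real.exp (z / b) *
        ((Real.exp (-z / b) - 1) * (Real.exp ((u - r) / b) - 1) +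
          (1 - Real.exp (z / b)) * (Real.exp ((r - l) / b) - 1)) ≤ 0 :=
      mul_nonpos_iff.mpr (Or.inl ⟨(Real.exp_pos _).le, by linarith⟩)
    have hden : 0 < 2 * b * Real.exp ((u - l) / b) *
        ((fun s => 1 - 1 / 2 * (Real.exp (-(s - l) / b) + Real.exp (-(u - s) / b))) r) ^ 2 := by
      apply mul_pos (mul_pos (by linarith) (Real.exp_pos _)) (pow_pos hCr 2)
    exact div_nonpos_of_nonpos_of_nonneg hnum hden.le
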